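/- Let φ be an N-function, C¹ on [0,∞) and C² on (0,∞), with φ'(t) ∼ t φ''(t) for t > 0, and suppose f ∈ C¹(ℝ^{N×n}) ∩ C²(ℝ^{N×n}\{0}) satisfies |D²f(Q)| ≤ c₁ φ''(|Q|) for all Q ≠ 0. Then |Df(Q) − Df(P)| ≤ c φ'_{|Q|}(|P − Q|) for all P, Q ∈ ℝ^{N×n}, where φ'_a(t) := φ'(a+t)·t/(a+t) and c depends only on c₁ and the characteristics of φ. -/

import Mathlib

open Set Filter

def IsNFunction (ψ ψ' : ℝ → ℝ) : Prop :=
  ψ 0 = 0 ∧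
  (∀ t ∈ Set.Ici (0:ℝ), HasDerivWithinAt ψ (ψ' t) (Set.Ici 0) t) ∧
  MonotoneOn ψ' (Set.Ici 0) ∧
  (∀ t ∈ Set.Ici (0:ℝ), ContinuousWithinAt ψ' (Set.Ici t) t) ∧
  ψ' 0 = 0 ∧
  (∀ t > (0:ℝ), 0 < ψ' t) ∧
  Filter.Tendsto ψ' Filter.atTop Filter.atTop

/-- The derivative `φ'_a(t) = φ'(a+t)·t/(a+t)` of the shifted N-function. -/
noncomputable def shiftDeriv (φ' : ℝ → ℝ) (a t : ℝ) : ℝ :=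
  φ' (a + t) * t / (a + t)

/-- Lower comparison: if `c₁ φ' ≤ t φ''` then `φ'(s) ≤ (s/t)^c₁ φ'(t)` for `0 < s ≤ t`. -/
lemma ratio_lower (c₁ : ℝ) (φ' φ'' : ℝ → ℝ)
    (hd : ∀ t > (0:ℝ), HasDerivAt φ' (φ'' t) t)
    (hlb : ∀ t > (0:ℝ), c₁ * φ' t ≤ t * φ'' t) :
    ∀ s t : ℝ, 0 < s → s ≤ t → φ' s ≤ (s / t) ^ c₁ * φ' t := by
  intro s t hs hst
  have ht : 0 < t := lt_of_lt_of_le hs hst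
  set h : ℝ → ℝ := fun u => φ' u * u ^ (-c₁) with hh
  have hmono : MonotoneOn h (Ioi 0) := by
    apply monotoneOn_of_hasDerivWithinAt_nonneg (convex_Ioi 0)
      (f' := fun u => φ'' u * u ^ (-c₁) + φ' u * (-c₁ * u ^ (-c₁ - 1)))
    · intro u hu
      exact ((hd u hu).continuousAt.mul
        (Real.continuousAt_rpow_const u (-c₁) (Or.inl hu.ne'))).continuousWithinAt
    · rw [interior_Ioi]
      intro u hu
      exact (((hd u hu).mul
        (Real.hasDerivAt_rpow_const (Or.inl hu.ne'))).hasDerivWithinAt)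
    · rw [interior_Ioi]
      intro u hu
      have hsplit : u ^ (-c₁) = u * u ^ (-c₁ - 1) := by
        have h2 := Real.rpow_add hu 1 (-c₁ - 1)
        rw [Real.rpow_one] at h2
        rw [show (1:ℝ) + (-c₁ - 1) = -c₁ by ring] at h2
        exact h2
      have hpow : (0:ℝ) ≤ u ^ (-c₁ - 1) := (Real.rpow_pos_of_pos hu _).le
      have := hlb u hu
      calc (0:ℝ) ≤ (u * φ'' u - c₁ * φ' u) * u ^ (-c₁ - 1) :=
            mul_nonneg (by linarith) hpow
        _ = φ'' u * u ^ (-c₁) + φ' u * (-c₁ * u ^ (-c₁ - 1)) := by rw [hsplit]; ring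
  have key := hmono (mem_Ioi.2 hs) (mem_Ioi.2 ht) hst
  have hspow : (0:ℝ) < s ^ c₁ := Real.rpow_pos_of_pos hs _
  have hs1 : s ^ (-c₁) * s ^ c₁ = 1 := by
    rw [← Real.rpow_add hs]; simp
  have hdiv : (s / t) ^ c₁ = s ^ c₁ * t ^ (-c₁) := by
    rw [Real.div_rpow hs.le ht.le, Real.rpow_neg ht.le, div_eq_mul_inv]
  have hkey := mul_le_mul_of_nonneg_right key hspow.le
  calc φ' s = φ' s * s ^ (-c₁) * s ^ c₁ := by rw [mul_assoc, hs1, mul_one]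
    _ ≤ φ' t * t ^ (-c₁) * s ^ c₁ := hkey
    _ = (s / t) ^ c₁ * φ' t := by rw [hdiv]; ring

lemma arith1 (cf c₂ p r a : ℝ) (hcf : 0 ≤ cf) (hc₂ : 0 ≤ c₂) (hp : 0 ≤ p)
    (hr : 0 < r) (hra : r ≤ a/2) :
    cf*(c₂*p/(a-r))*r ≤ 3*cf*c₂*(p*r/(a+r)) := by
  have ham : 0 < a - r := by linarith
  have har : 0 < a + r := by linarith
  rw [show cf*(c₂*p/(a-r))*r = cf*c₂*p*r/(a-r) by ring,
    show 3*cf*c₂*(p*r/(a+r)) = 3*(cf*c₂*p*r)/(a+r) by ring,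
    div_le_div_iff₀ ham har]
  nlinarith [mul_nonneg (mul_nonneg (mul_nonneg hcf hc₂) hp) hr.le]

lemma arith2 (D p r a : ℝ) (hD : 0 ≤ D) (hp : 0 ≤ p) (ha : 0 ≤ a) (h : a < 2*r) :
    2*D*p ≤ 6*D*(p*r/(a+r)) := by
  have har : 0 < a + r := by linarith
  rw [show 6*D*(p*r/(a+r)) = (6*D*(p*r))/(a+r) by ring, le_div_iff₀ har]
  nlinarith [mul_nonneg (mul_nonneg hD hp) (by linarith : (0:ℝ) ≤ 2*r - a)]

/-- Mean value bound on a segment. -/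
lemma seg_bound {E F : Type*} [NormedAddCommGroup E] [NormedSpace ℝ E]
    [NormedAddCommGroup F] [NormedSpace ℝ F]
    (g : E → F) (g' : E → E →L[ℝ] F) (X Y : E) (B : ℝ)
    (hg : ∀ x ∈ segment ℝ X Y, HasFDerivAt g (g' x) x)
    (hb : ∀ x ∈ segment ℝ X Y, ‖g' x‖ ≤ B) :
    ‖g Y - g X‖ ≤ B * ‖Y - X‖ :=
  (convex_segment X Y).norm_image_sub_le_of_norm_hasFDerivWithin_le
    (fun x hx => (hg x hx).hasFDerivWithinAt) hb (left_mem_segment ℝ X Y)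
    (right_mem_segment ℝ X Y)

set_option maxHeartbeats 3000000 in
theorem Df_difference_estimate (c₁ c₂ cf : ℝ) (hc₁ : 0 < c₁) (hc₂ : 0 < c₂)
    (hcf : 0 < cf) :
    ∃ c : ℝ, 0 < c ∧
      ∀ (N n : ℕ) (φ φ' φ'' : ℝ → ℝ), IsNFunction φ φ' →
        (∀ t > (0:ℝ), HasDerivAt φ' (φ'' t) t) →
        (∀ t > (0:ℝ), ContinuousAt φ'' t) →
        (∀ t > (0:ℝ), c₁ * φ' t ≤ t * φ'' t ∧ t * φ'' t ≤ c₂ * φ' t) →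
        ∀ f : EuclideanSpace ℝ (Fin N × Fin n) → ℝ,
          ContDiff ℝ 1 f →
          ContDiffOn ℝ 2 f {(0 : EuclideanSpace ℝ (Fin N × Fin n))}ᶜ →
          (∀ Q : EuclideanSpace ℝ (Fin N × Fin n), Q ≠ 0 →
            ‖fderiv ℝ (fderiv ℝ f) Q‖ ≤ cf * φ'' ‖Q‖) →
          ∀ P Q : EuclideanSpace ℝ (Fin N × Fin n),
            ‖fderiv ℝ f Q - fderiv ℝ f P‖ ≤ c * shiftDeriv φ' ‖Q‖ ‖P - Q‖ := by
  set ρ : ℝ := (2:ℝ) ^ (-c₁) with hρdef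
  have hρ0 : 0 < ρ := Real.rpow_pos_of_pos two_pos _
  have hρ1 : ρ < 1 := Real.rpow_lt_one_of_one_lt_of_neg one_lt_two (by linarith)
  have h1ρ : 0 < 1 - ρ := by linarith
  refine ⟨3*cf*c₂ + 6*(cf*c₂*(1-ρ)⁻¹), by positivity, ?_⟩
  intro N n φ φ' φ'' hN hd hcont hcmp f hf1 hf2 hD2 P Q
  obtain ⟨-, -, hmono, -, hzero, hpos, -⟩ := hN
  have hφ'0 : ∀ t : ℝ, 0 ≤ t → 0 ≤ φ' t := by
    intro t ht
    have := hmono (mem_Ici.2 le_rfl) (mem_Ici.2 ht) ht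
    rw [hzero] at this; exact this
  -- differentiability of the derivative away from 0
  have hc1' : ContDiffOn ℝ 1 (fun x => fderiv ℝ f x)
      {(0 : EuclideanSpace ℝ (Fin N × Fin n))}ᶜ :=
    hf2.fderiv_of_isOpen isOpen_compl_singleton (by norm_num)
  have hdiff2 : ∀ x : EuclideanSpace ℝ (Fin N × Fin n), x ≠ 0 →
      HasFDerivAt (fderiv ℝ f) (fderiv ℝ (fderiv ℝ f) x) x := by
    intro x hx
    exact ((hc1'.differentiableOn one_ne_zero).differentiableAt
      (isOpen_compl_singleton.mem_nhds hx)).hasFDerivAt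
  -- pointwise second derivative bound on annuli
  have hb : ∀ (x : EuclideanSpace ℝ (Fin N × Fin n)) (m M : ℝ), 0 < m → m ≤ ‖x‖ → ‖x‖ ≤ M →
      ‖fderiv ℝ (fderiv ℝ f) x‖ ≤ cf * (c₂ * φ' M / m) := by
    intro x m M hm hmx hxM
    have hx0 : (0:ℝ) < ‖x‖ := lt_of_lt_of_le hm hmx
    have hxne : x ≠ 0 := norm_pos_iff.1 hx0
    refine (hD2 x hxne).trans ?_
    have h1 : ‖x‖ * φ'' ‖x‖ ≤ c₂ * φ' ‖x‖ := (hcmp _ hx0).2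
    have h2 : φ' ‖x‖ ≤ φ' M := hmono (mem_Ici.2 hx0.le) (mem_Ici.2 (hx0.le.trans hxM)) hxM
    have hφ'x : 0 < φ' ‖x‖ := hpos _ hx0
    have hφ''x : 0 < φ'' ‖x‖ := by nlinarith [(hcmp _ hx0).1]
    have h3 : φ'' ‖x‖ ≤ c₂ * φ' M / m := by
      rw [le_div_iff₀ hm]
      nlinarith [mul_le_mul_of_nonneg_left h2 hc₂.le, mul_le_mul_of_nonneg_left hmx hφ''x.le]
    exact mul_le_mul_of_nonneg_left h3 hcf.le
  -- segment bound away from the origin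
  have hseg : ∀ (X Y : EuclideanSpace ℝ (Fin N × Fin n)) (m M : ℝ), 0 < m →
      (∀ z ∈ segment ℝ X Y, m ≤ ‖z‖ ∧ ‖z‖ ≤ M) →
      ‖fderiv ℝ f Y - fderiv ℝ f X‖ ≤ cf * (c₂ * φ' M / m) * ‖Y - X‖ := by
    intro X Y m M hm hz
    apply seg_bound (fun x => fderiv ℝ f x) (fun x => fderiv ℝ (fderiv ℝ f) x)
    · intro x hx
      exact hdiff2 x (norm_pos_iff.1 (lt_of_lt_of_le hm (hz x hx).1))
    · intro x hx
      exact hb x m M hm (hz x hx).1 (hz x hx).2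
  have hDfc : Continuous (fun x : EuclideanSpace ℝ (Fin N × Fin n) => fderiv ℝ f x) :=
    hf1.continuous_fderiv one_ne_zero
  -- telescoping bound to the origin
  have key0 : ∀ X : EuclideanSpace ℝ (Fin N × Fin n),
      ‖fderiv ℝ f X - fderiv ℝ f 0‖ ≤ cf*c₂*(1-ρ)⁻¹ * φ' ‖X‖ := by
    intro X
    rcases eq_or_ne X 0 with rfl | hX
    · simp [hzero]
    · have ha : 0 < ‖X‖ := norm_pos_iff.2 hX
      set a : ℝ := ‖X‖ with hadef
      have hpowpos : ∀ k : ℕ, (0:ℝ) < (2:ℝ)⁻¹ ^ k := fun k => pow_pos (by norm_num) k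
      have hrpow : ∀ k : ℕ, ((2:ℝ)⁻¹ ^ k) ^ c₁ = ρ ^ k := by
        intro k
        have l1 : ((2:ℝ)⁻¹ ^ k : ℝ) ^ c₁ = (2:ℝ) ^ ((-1) * (k:ℝ) * c₁) := by
          rw [show ((2:ℝ))⁻¹ = (2:ℝ) ^ (-1:ℝ) by rw [Real.rpow_neg_one],
            ← Real.rpow_natCast ((2:ℝ) ^ (-1:ℝ)) k,
            ← Real.rpow_mul (by norm_num : (0:ℝ) ≤ 2),
            ← Real.rpow_mul (by norm_num : (0:ℝ) ≤ 2)]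
        have l2 : ρ ^ k = (2:ℝ) ^ ((-c₁) * (k:ℝ)) := by
          rw [hρdef, ← Real.rpow_natCast ((2:ℝ) ^ (-c₁)) k,
            ← Real.rpow_mul (by norm_num : (0:ℝ) ≤ 2)]
        rw [l1, l2]
        congr 1
        ring
      -- one dyadic step
      have step : ∀ k : ℕ, ‖fderiv ℝ f ((2:ℝ)⁻¹^k • X) - fderiv ℝ f ((2:ℝ)⁻¹^(k+1) • X)‖
          ≤ cf*c₂*φ' a * ρ^k := by
        intro k
        have hb2 : ((2:ℝ)⁻¹^(k+1)) = (2:ℝ)⁻¹^k * 2⁻¹ := pow_succ _ _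
        have hbpos := hpowpos (k+1)
        have hcpos := hpowpos k
        have hmem : ∀ z ∈ segment ℝ (((2:ℝ)⁻¹^(k+1)) • X) (((2:ℝ)⁻¹^k) • X),
            a * (2:ℝ)⁻¹^(k+1) ≤ ‖z‖ ∧ ‖z‖ ≤ a * (2:ℝ)⁻¹^k := by
          intro z hz
          rw [segment_eq_image] at hz
          obtain ⟨θ, ⟨hθ0, hθ1⟩, rfl⟩ := hz
          dsimp only
          have hz' : (1-θ) • (((2:ℝ)⁻¹^(k+1)) • X) + θ • (((2:ℝ)⁻¹^k) • X)
              = ((1-θ) * (2:ℝ)⁻¹^(k+1) + θ * (2:ℝ)⁻¹^k) • X := by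
            rw [smul_smul, smul_smul, ← add_smul]
          rw [hz', norm_smul, Real.norm_eq_abs, ← hadef]
          have hs1 : (2:ℝ)⁻¹^(k+1) ≤ (1-θ) * (2:ℝ)⁻¹^(k+1) + θ * (2:ℝ)⁻¹^k := by nlinarith
          have hs2 : (1-θ) * (2:ℝ)⁻¹^(k+1) + θ * (2:ℝ)⁻¹^k ≤ (2:ℝ)⁻¹^k := by nlinarith
          rw [abs_of_pos (lt_of_lt_of_le hbpos hs1)]
          constructor <;> nlinarith
        have hsb := hseg (((2:ℝ)⁻¹^(k+1)) • X) (((2:ℝ)⁻¹^k) • X)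
          (a * (2:ℝ)⁻¹^(k+1)) (a * (2:ℝ)⁻¹^k) (mul_pos ha hbpos) hmem
        have hd1 : ‖((2:ℝ)⁻¹^k) • X - ((2:ℝ)⁻¹^(k+1)) • X‖ = a * (2:ℝ)⁻¹^(k+1) := by
          rw [← sub_smul, norm_smul, Real.norm_eq_abs, ← hadef]
          have h3 : (2:ℝ)⁻¹^k - (2:ℝ)⁻¹^(k+1) = (2:ℝ)⁻¹^(k+1) := by
            rw [hb2]; ring
          rw [h3, abs_of_pos hbpos]; ring
        rw [hd1] at hsb
        refine hsb.trans ?_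
        have hcancel : cf * (c₂ * φ' (a * (2:ℝ)⁻¹^k) / (a * (2:ℝ)⁻¹^(k+1))) * (a * (2:ℝ)⁻¹^(k+1))
            = cf * c₂ * φ' (a * (2:ℝ)⁻¹^k) := by
          field_simp
        rw [hcancel]
        have hccle : (2:ℝ)⁻¹^k ≤ 1 := pow_le_one₀ (by norm_num) (by norm_num)
        have hlow := ratio_lower c₁ φ' φ'' hd (fun t ht => (hcmp t ht).1)
          (a * (2:ℝ)⁻¹^k) a (mul_pos ha hcpos) (by nlinarith)
        have hac : a * (2:ℝ)⁻¹^k / a = (2:ℝ)⁻¹^k := by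
          field_simp
        rw [hac, hrpow k] at hlow
        calc cf*c₂*φ' (a * (2:ℝ)⁻¹^k) ≤ cf*c₂*(ρ^k * φ' a) :=
              mul_le_mul_of_nonneg_left hlow (by positivity)
          _ = cf*c₂*φ' a * ρ^k := by ring
      -- telescoping
      have tele : ∀ K : ℕ, ‖fderiv ℝ f X - fderiv ℝ f ((2:ℝ)⁻¹^K • X)‖
          ≤ cf*c₂*φ' a * ∑ k ∈ Finset.range K, ρ^k := by
        intro K
        induction K with
        | zero => simp
        | succ K ih =>
          calc ‖fderiv ℝ f X - fderiv ℝ f ((2:ℝ)⁻¹^(K+1) • X)‖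
              ≤ ‖fderiv ℝ f X - fderiv ℝ f ((2:ℝ)⁻¹^K • X)‖
                + ‖fderiv ℝ f ((2:ℝ)⁻¹^K • X) - fderiv ℝ f ((2:ℝ)⁻¹^(K+1) • X)‖ :=
              norm_sub_le_norm_sub_add_norm_sub _ _ _
            _ ≤ cf*c₂*φ' a * ∑ k ∈ Finset.range K, ρ^k + cf*c₂*φ' a * ρ^K :=
              add_le_add ih (step K)
            _ = cf*c₂*φ' a * ∑ k ∈ Finset.range (K+1), ρ^k := by
              rw [Finset.sum_range_succ]; ring
      have hsum : ∀ K : ℕ, (∑ k ∈ Finset.range K, ρ^k) ≤ (1-ρ)⁻¹ := by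
        intro K
        rw [geom_sum_eq (by linarith : ρ ≠ 1) K]
        have h2 : (ρ^K - 1)/(ρ - 1) = (1 - ρ^K)/(1-ρ) := by
          rw [div_eq_div_iff (by linarith) (by linarith)]; ring
        rw [h2, inv_eq_one_div]
        have h3 : (0:ℝ) ≤ ρ^K := pow_nonneg hρ0.le K
        gcongr
        linarith
      have hXlim : Tendsto (fun K : ℕ => (2:ℝ)⁻¹^K • X) atTop (nhds 0) := by
        have h2 : Tendsto (fun K : ℕ => (2:ℝ)⁻¹^K) atTop (nhds 0) :=
          tendsto_pow_atTop_nhds_zero_of_lt_one (by norm_num) (by norm_num)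
        have h3 := h2.smul_const X
        simpa using h3
      have hlim : Tendsto (fun K : ℕ => ‖fderiv ℝ f X - fderiv ℝ f ((2:ℝ)⁻¹^K • X)‖)
          atTop (nhds ‖fderiv ℝ f X - fderiv ℝ f 0‖) :=
        (tendsto_const_nhds.sub ((hDfc.tendsto 0).comp hXlim)).norm
      refine le_of_tendsto hlim (Eventually.of_forall fun K => ?_)
      calc ‖fderiv ℝ f X - fderiv ℝ f ((2:ℝ)⁻¹^K • X)‖
          ≤ cf*c₂*φ' a * ∑ k ∈ Finset.range K, ρ^k := tele K
        _ ≤ cf*c₂*φ' a * (1-ρ)⁻¹ := by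
            have := hφ'0 a ha.le
            exact mul_le_mul_of_nonneg_left (hsum K) (by positivity)
        _ = cf*c₂*(1-ρ)⁻¹ * φ' a := by ring
  -- main case split
  have ha0 : (0:ℝ) ≤ ‖Q‖ := norm_nonneg _
  have hr0 : (0:ℝ) ≤ ‖P - Q‖ := norm_nonneg _
  set a : ℝ := ‖Q‖ with hadef
  set r : ℝ := ‖P - Q‖ with hrdef
  have hφ'ar : 0 ≤ φ' (a + r) := hφ'0 _ (by linarith)
  rcases eq_or_lt_of_le hr0 with hr | hr
  · -- r = 0, P = Q
    have hPQ : P = Q := by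
      rw [← sub_eq_zero]; exact norm_eq_zero.1 hr.symm
    rw [hPQ, sub_self, norm_zero]
    have h0 : shiftDeriv φ' a r = 0 := by
      rw [shiftDeriv, ← hr]; simp
    rw [h0, mul_zero]
  · have har : 0 < a + r := by linarith
    have hsd : shiftDeriv φ' a r = φ' (a+r) * r / (a+r) := rfl
    have hsdpos : 0 ≤ shiftDeriv φ' a r := by
      rw [hsd]; positivity
    rcases le_or_gt r (a/2) with hcase | hcase
    · -- near case : segment avoids the origin
      have ham : 0 < a - r := by linarith
      have hmem : ∀ z ∈ segment ℝ P Q, a - r ≤ ‖z‖ ∧ ‖z‖ ≤ a + r := by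
        intro z hz
        have hzQ : ‖z - Q‖ ≤ r := by
          have hPball : P ∈ Metric.closedBall Q r := by
            simp [Metric.mem_closedBall, dist_eq_norm, hrdef]
          have hQball : Q ∈ Metric.closedBall Q r := Metric.mem_closedBall_self hr0
          have h4 := (convex_closedBall Q r).segment_subset hPball hQball hz
          simpa [Metric.mem_closedBall, dist_eq_norm] using h4
        constructor
        · have h5 : ‖Q‖ - ‖z‖ ≤ ‖Q - z‖ := norm_sub_norm_le Q z
          rw [norm_sub_rev] at h5
          rw [← hadef] at h5
          linarith
        · have h6 : ‖z‖ ≤ ‖z - Q‖ + ‖Q‖ := by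
            calc ‖z‖ = ‖z - Q + Q‖ := by rw [sub_add_cancel]
              _ ≤ ‖z - Q‖ + ‖Q‖ := norm_add_le _ _
          rw [← hadef] at h6
          linarith
      have h1 := hseg P Q (a-r) (a+r) ham hmem
      rw [norm_sub_rev Q P, ← hrdef] at h1
      refine h1.trans ?_
      have key : cf*(c₂*φ' (a+r)/(a-r))*r ≤ 3*cf*c₂ * (φ' (a+r)*r/(a+r)) :=
        arith1 cf c₂ (φ' (a+r)) r a hcf.le hc₂.le hφ'ar hr hcase
      refine key.trans ?_
      rw [← hsd]
      have hcc : (3:ℝ)*cf*c₂ ≤ 3*cf*c₂ + 6*(cf*c₂*(1-ρ)⁻¹) := by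
        have h6 : (0:ℝ) ≤ 6*(cf*c₂*(1-ρ)⁻¹) := by positivity
        linarith
      exact mul_le_mul_of_nonneg_right hcc hsdpos
    · -- far case : go through the origin
      have hP : ‖P‖ ≤ a + r := by
        calc ‖P‖ = ‖P - Q + Q‖ := by rw [sub_add_cancel]
          _ ≤ ‖P - Q‖ + ‖Q‖ := norm_add_le _ _
          _ = a + r := by rw [← hadef, ← hrdef]; ring
      have hφP : φ' ‖P‖ ≤ φ' (a+r) := hmono (mem_Ici.2 (norm_nonneg _)) (mem_Ici.2 har.le) hP
      have hφQ : φ' a ≤ φ' (a+r) := hmono (mem_Ici.2 ha0) (mem_Ici.2 har.le) (by linarith)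
      have hQ1 := key0 Q
      have hP1 := key0 P
      rw [← hadef] at hQ1
      have hC₀ : (0:ℝ) < cf*c₂*(1-ρ)⁻¹ := by positivity
      have htri : ‖fderiv ℝ f Q - fderiv ℝ f P‖
          ≤ ‖fderiv ℝ f Q - fderiv ℝ f 0‖ + ‖fderiv ℝ f P - fderiv ℝ f 0‖ := by
        calc ‖fderiv ℝ f Q - fderiv ℝ f P‖
            = ‖(fderiv ℝ f Q - fderiv ℝ f 0) - (fderiv ℝ f P - fderiv ℝ f 0)‖ := by
              rw [sub_sub_sub_cancel_right]
          _ ≤ _ := norm_sub_le _ _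
      have hchain : ‖fderiv ℝ f Q - fderiv ℝ f P‖ ≤ 2*(cf*c₂*(1-ρ)⁻¹)*φ' (a+r) := by
        have e1 : cf*c₂*(1-ρ)⁻¹ * φ' a ≤ cf*c₂*(1-ρ)⁻¹ * φ' (a+r) :=
          mul_le_mul_of_nonneg_left hφQ hC₀.le
        have e2 : cf*c₂*(1-ρ)⁻¹ * φ' ‖P‖ ≤ cf*c₂*(1-ρ)⁻¹ * φ' (a+r) :=
          mul_le_mul_of_nonneg_left hφP hC₀.le
        calc ‖fderiv ℝ f Q - fderiv ℝ f P‖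
            ≤ ‖fderiv ℝ f Q - fderiv ℝ f 0‖ + ‖fderiv ℝ f P - fderiv ℝ f 0‖ := htri
          _ ≤ cf*c₂*(1-ρ)⁻¹ * φ' a + cf*c₂*(1-ρ)⁻¹ * φ' ‖P‖ := add_le_add hQ1 hP1
          _ ≤ 2*(cf*c₂*(1-ρ)⁻¹)*φ' (a+r) := by linarith
      refine hchain.trans ?_
      have hfinal : 2*(cf*c₂*(1-ρ)⁻¹)*φ' (a+r)
          ≤ 6*(cf*c₂*(1-ρ)⁻¹)*(φ' (a+r)*r/(a+r)) :=
        arith2 _ _ _ _ hC₀.le hφ'ar ha0 (by linarith)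
      refine hfinal.trans ?_
      rw [← hsd]
      have hcc : (6:ℝ)*(cf*c₂*(1-ρ)⁻¹) ≤ 3*cf*c₂ + 6*(cf*c₂*(1-ρ)⁻¹) := by
        have h3 : (0:ℝ) ≤ 3*cf*c₂ := by positivity
        linarith
      exact mul_le_mul_of_nonneg_right hcc hsdpos
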